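/- arXiv:math/0506023 — 3 statements merged into one kernel-verified Lean document; each statement's English description precedes it below -/
import Mathlib

section
/- Let A and A' be commutative rings with identity whose additive groups are free abelian of rank 2 with bases {1, x} and {1', x'} respectively (where 1, 1' are the identities), with multiplication determined by x·x = a·1 + b·x and x'·x' = a'·1' + b'·x' for integers a, b, a', b'. Then A ≅ A' as rings if and only if b² + 4a = b'² + 4a' and b ≡ b' (mod 2). -/
private lemma coeffs_eq (A' : Type) [AddCommGroup A'] [Module ℤ A'] (B' : Module.Basis (Fin 2) ℤ A')
    (c d c' d' : ℤ) (h : c • B' 0 + d • B' 1 = c' • B' 0 + d' • B' 1) :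
    c = c' ∧ d = d' := by
  have h0 := congrArg (fun z => B'.repr z 0) h
  have h1 := congrArg (fun z => B'.repr z 1) h
  simp [Module.Basis.repr_self, Finsupp.single_apply] at h0 h1
  exact ⟨h0, h1⟩


/-- Classification of ring structures on `ℤ ⊕ ℤ`: two commutative rings with identity,
free abelian of rank 2 with bases `{1, x}` and `{1', x'}`, with `x*x = a•1 + b•x` and
`x'*x' = a'•1' + b'•x'`, are isomorphic iff `b² + 4a = b'² + 4a'` and `b ≡ b' (mod 2)`. -/
theorem rank_two_ring_classification (A A' : Type) [CommRing A] [CommRing A']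
    (x : A) (x' : A') (a b a' b' : ℤ)
    (B : Module.Basis (Fin 2) ℤ A) (hB0 : B 0 = 1) (hB1 : B 1 = x)
    (B' : Module.Basis (Fin 2) ℤ A') (hB'0 : B' 0 = 1) (hB'1 : B' 1 = x')
    (hx : x * x = a • (1 : A) + b • x) (hx' : x' * x' = a' • (1 : A') + b' • x') :
    Nonempty (A ≃+* A') ↔ (b ^ 2 + 4 * a = b' ^ 2 + 4 * a' ∧ b % 2 = b' % 2) := by
  constructor
  · rintro ⟨f⟩
    set m : ℤ := B'.repr (f x) 0 with hm
    set n : ℤ := B'.repr (f x) 1 with hn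
    have hfx : f x = m • B' 0 + n • B' 1 := by
      have := B'.sum_repr (f x)
      rw [Fin.sum_univ_two] at this
      exact this.symm
    -- n is a unit
    have hunit : IsUnit n := by
      have h := LinearEquiv.isUnit_det f.toAddEquiv.toIntLinearEquiv B B'
      rw [Matrix.det_fin_two] at h
      have e00 : LinearMap.toMatrix B B' f.toAddEquiv.toIntLinearEquiv 0 0 = 1 := by
        simp [LinearMap.toMatrix_apply, hB0, Module.Basis.repr_self, ← hB'0]
      have e10 : LinearMap.toMatrix B B' f.toAddEquiv.toIntLinearEquiv 1 0 = 0 := by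
        simp [LinearMap.toMatrix_apply, hB0, Module.Basis.repr_self, ← hB'0]
      have e11 : LinearMap.toMatrix B B' f.toAddEquiv.toIntLinearEquiv 1 1 = n := by
        simp [LinearMap.toMatrix_apply, hB1, hn]
      rw [e00, e10, e11] at h
      simpa using h
    have hn2 : n = 1 ∨ n = -1 := Int.isUnit_iff.mp hunit
    -- apply f to hx
    have hmul : (m • (1:A') + n • x') * (m • (1:A') + n • x')
        = a • (1:A') + b • (m • (1:A') + n • x') := by
      have := congrArg f hx
      simp only [map_mul, map_add, map_zsmul, map_one] at this
      rw [hfx, hB'0, hB'1] at this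
      exact this
    -- expand using hx'
    have key : (m^2 + n^2 * a') • B' 0 + (2*m*n + n^2*b') • B' 1
        = (a + b*m) • B' 0 + (b*n) • B' 1 := by
      rw [hB'0, hB'1]
      have lhs : (m • (1:A') + n • x') * (m • (1:A') + n • x')
          = (m^2 + n^2 * a') • (1:A') + (2*m*n + n^2*b') • x' := by
        simp only [zsmul_eq_mul, mul_one] at hx' ⊢
        push_cast
        linear_combination ((n:A')^2) * hx'
      have rhs : a • (1:A') + b • (m • (1:A') + n • x')
          = (a + b*m) • (1:A') + (b*n) • x' := by
        simp only [zsmul_eq_mul, mul_one]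
        push_cast
        ring
      rw [lhs, rhs] at hmul
      exact hmul
    obtain ⟨e1, e2⟩ := coeffs_eq A' B' _ _ _ _ key
    rcases hn2 with h | h <;> rw [h] at e1 e2 <;> ring_nf at e1 e2 <;>
      [(have hb' : b' = b - 2*m := by omega); (have hb' : b' = 2*m - b := by omega)] <;>
      subst hb' <;> exact ⟨by linear_combination -4*e1, by omega⟩
  · rintro ⟨hdisc, hmod⟩
    obtain ⟨m, hm⟩ : ∃ m, b' = b - 2 * m := ⟨(b - b')/2, by omega⟩
    subst hm
    have h4 : 4*a' = 4*(a + b*m - m^2) := by linear_combination -hdisc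
    have ha' : a' = a + b*m - m^2 := by omega
    subst ha'
    set y : A' := m • (1:A') + x' with hy
    have hyy : y * y = a • (1:A') + b • y := by
      simp only [hy, zsmul_eq_mul, mul_one] at hx' ⊢
      push_cast at hx' ⊢
      linear_combination hx'
    -- forward and inverse linear maps
    set fwd : A →ₗ[ℤ] A' := B.constr ℤ ![(1:A'), y] with hfwd
    set inv : A' →ₗ[ℤ] A := B'.constr ℤ ![(1:A), x - m • (1:A)] with hinv
    have fwd0 : fwd 1 = 1 := by rw [← hB0, hfwd, Module.Basis.constr_basis]; rfl
    have fwd1 : fwd x = y := by rw [← hB1, hfwd, Module.Basis.constr_basis]; rfl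
    have inv0 : inv 1 = 1 := by rw [← hB'0, hinv, Module.Basis.constr_basis]; rfl
    have inv1 : inv x' = x - m • (1:A) := by rw [← hB'1, hinv, Module.Basis.constr_basis]; rfl
    have fwdm : ∀ k : ℤ, fwd (k • (1:A)) = k • (1:A') := by
      intro k; rw [map_zsmul, fwd0]
    have invm : ∀ k : ℤ, inv (k • (1:A')) = k • (1:A) := by
      intro k; rw [map_zsmul, inv0]
    have h1 : fwd.comp inv = LinearMap.id := by
      apply B'.ext
      intro i
      fin_cases i
      · simp [hB'0, inv0, fwd0]
      · show fwd (inv (B' 1)) = B' 1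
        rw [hB'1, inv1, map_sub, fwd1, fwdm, hy]
        abel
    have h2 : inv.comp fwd = LinearMap.id := by
      apply B.ext
      intro i
      fin_cases i
      · simp [hB0, fwd0, inv0]
      · show inv (fwd (B 1)) = B 1
        rw [hB1, fwd1, hy, map_add, inv1, invm]
        abel
    set F := LinearEquiv.ofLinear fwd inv h1 h2 with hF
    have hbil : (LinearMap.mul ℤ A).compr₂ fwd
        = ((LinearMap.mul ℤ A').compl₁₂ fwd fwd) := by
      apply LinearMap.ext_basis B B
      intro i j
      fin_cases i <;> fin_cases j <;>
        simp only [LinearMap.compr₂_apply, LinearMap.compl₁₂_apply, LinearMap.mul_apply',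
          Fin.zero_eta, Fin.mk_one]
      · rw [hB0, one_mul, fwd0, one_mul]
      · rw [hB0, hB1, one_mul, fwd0, fwd1, one_mul]
      · rw [hB0, hB1, mul_one, fwd0, fwd1, mul_one]
      · rw [hB1, hx, map_add, map_zsmul, map_zsmul, fwd0, fwd1, ← hyy]
    have hmul : ∀ u v : A, fwd (u * v) = fwd u * fwd v := by
      intro u v
      have := LinearMap.congr_fun (LinearMap.congr_fun hbil u) v
      simpa using this
    exact ⟨{ F.toAddEquiv with map_mul' := fun u v => hmul u v }⟩
end

section
/- With notation as in the classification of rank-2 rings: if f: A → A' is a ring isomorphism between the rings determined by (a,b) and (a',b'), and f(x) = k·1' + l·x', then l = ±1, l²a' − klb' − k² = a, and 2k + lb' = b; consequently b'² + 4a' = b² + 4a and b ≡ b' (mod 2). -/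
lemma coords_inj_rank2 {R : Type} [AddCommGroup R]
    (B : Module.Basis (Fin 2) ℤ R) {u v u' v' : ℤ}
    (h : u • B 0 + v • B 1 = u' • B 0 + v' • B 1) : u = u' ∧ v = v' := by
  have hli := B.linearIndependent
  rw [Fintype.linearIndependent_iff] at hli
  have h0 : (u - u') • B 0 + (v - v') • B 1 = 0 := by
    rw [sub_smul, sub_smul]
    rw [← sub_eq_zero] at h
    rw [← h]; abel
  have := hli ![u - u', v - v'] (by
    rw [Fin.sum_univ_two]
    simpa using h0)
  constructor
  · have := this 0; simp at this; omega
  · have := this 1; simp at this; omega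

/-- If `f : A → A'` is a ring isomorphism between the rank-2 rings determined by `(a,b)`
and `(a',b')`, and `f x = k•1' + l•x'`, then `l = ±1`, `l²a' − klb' − k² = a`,
`2k + lb' = b`; consequently `b'² + 4a' = b² + 4a` and `b ≡ b' (mod 2)`. -/
theorem rank_two_ring_iso_relations (A A' : Type) [CommRing A] [CommRing A']
    (x : A) (x' : A') (a b a' b' : ℤ)
    (B : Module.Basis (Fin 2) ℤ A) (hB0 : B 0 = 1) (hB1 : B 1 = x)
    (B' : Module.Basis (Fin 2) ℤ A') (hB'0 : B' 0 = 1) (hB'1 : B' 1 = x')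
    (hx : x * x = a • (1 : A) + b • x) (hx' : x' * x' = a' • (1 : A') + b' • x')
    (f : A ≃+* A') (k l : ℤ) (hf : f x = k • (1 : A') + l • x') :
    (l = 1 ∨ l = -1) ∧ l ^ 2 * a' - k * l * b' - k ^ 2 = a ∧ 2 * k + l * b' = b ∧
      b' ^ 2 + 4 * a' = b ^ 2 + 4 * a ∧ b % 2 = b' % 2 := by
  -- main multiplicative relation
  have hmul : f x * f x = a • (1 : A') + b • f x := by
    rw [← map_mul, hx, map_add, map_zsmul, map_zsmul, map_one]
  have key : (a + b * k) • (1 : A') + (b * l) • x'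
      = (k * k + l * l * a') • (1 : A') + (2 * (k * l) + l * l * b') • x' := by
    have lhs : f x * f x = (a + b * k) • (1 : A') + (b * l) • x' := by
      rw [hmul, hf, smul_add, add_smul, mul_smul, mul_smul]
      abel
    have rhs : f x * f x = (k * k + l * l * a') • (1 : A')
        + (2 * (k * l) + l * l * b') • x' := by
      rw [hf]
      simp only [add_mul, mul_add, smul_mul_smul_comm, one_mul, mul_one, hx',
        smul_add, smul_smul]
      module
    rw [← lhs, rhs]
  rw [← hB'0, ← hB'1] at key
  obtain ⟨e1, e2⟩ := coords_inj_rank2 B' key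
  -- surjectivity: x' is in the image
  obtain ⟨y, hy⟩ := f.surjective x'
  have hyrep : y = (B.repr y 0) • (1 : A) + (B.repr y 1) • x := by
    have := B.sum_repr y
    rw [Fin.sum_univ_two, hB0, hB1] at this
    exact this.symm
  have hx'eq : (0 : ℤ) • (1 : A') + (1 : ℤ) • x'
      = (B.repr y 0 + B.repr y 1 * k) • (1 : A') + (B.repr y 1 * l) • x' := by
    have : x' = f y := hy.symm
    rw [hyrep] at this
    rw [map_add, map_zsmul, map_zsmul, map_one, hf, smul_add, smul_smul, smul_smul,
      ← add_assoc, ← add_smul] at this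
    simpa using this
  rw [← hB'0, ← hB'1] at hx'eq
  obtain ⟨_, e4⟩ := coords_inj_rank2 B' hx'eq
  have hdvd : l ∣ 1 := ⟨B.repr y 1, by rw [e4, mul_comm]⟩
  have hl : l = 1 ∨ l = -1 := Int.isUnit_iff.mp (isUnit_of_dvd_one hdvd)
  have hll : l * l = 1 := by rcases hl with h | h <;> subst h <;> ring
  have h1 : l ^ 2 * a' - k * l * b' - k ^ 2 = a := by
    linear_combination (-1) * e1 + (k * l) * e2 + (2 * k ^ 2 + k * l * b' - b * k) * hll
  have h2 : 2 * k + l * b' = b := by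
    linear_combination (-l) * e2 + (b - 2 * k - l * b') * hll
  refine ⟨hl, h1, h2, ?_, ?_⟩
  · linear_combination 4 * h1 + (2 * k + l * b' + b) * h2 + (-(b' ^ 2) - 4 * a') * hll
  · rcases hl with h | h <;> subst h <;> omega
end

section
/- With notation as in the classification of rank-2 rings: if b² + 4a = b'² + 4a' and b ≡ b' (mod 2), then the map f: A → A' defined by f(1) = 1' and f(x) = k·1' + x' with k = (b − b')/2 is a ring isomorphism. -/
/-- Converse direction of the rank-2 ring classification: if `b² + 4a = b'² + 4a'` and
`b ≡ b' (mod 2)`, then with `k = (b − b')/2` the map determined by `1 ↦ 1'` and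
`x ↦ k•1' + x'` is a ring isomorphism `A ≅ A'`. -/
theorem rank_two_ring_iso_of_invariants (A A' : Type) [CommRing A] [CommRing A']
    (x : A) (x' : A') (a b a' b' : ℤ)
    (B : Module.Basis (Fin 2) ℤ A) (hB0 : B 0 = 1) (hB1 : B 1 = x)
    (B' : Module.Basis (Fin 2) ℤ A') (hB'0 : B' 0 = 1) (hB'1 : B' 1 = x')
    (hx : x * x = a • (1 : A) + b • x) (hx' : x' * x' = a' • (1 : A') + b' • x')
    (hdisc : b ^ 2 + 4 * a = b' ^ 2 + 4 * a') (k : ℤ) (hk : 2 * k = b - b') :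
    ∃ f : A ≃+* A', f x = k • (1 : A') + x' := by
  have hrep : ∀ y : A, ∃ m n : ℤ, y = m • (1 : A) + n • x := by
    intro y
    refine ⟨B.repr y 0, B.repr y 1, ?_⟩
    have h := B.sum_repr y
    rw [Fin.sum_univ_two, hB0, hB1] at h
    exact h.symm
  set fl : A →ₗ[ℤ] A' := B.constr ℤ ![1, k • (1 : A') + x'] with hfl
  set gl : A' →ₗ[ℤ] A := B'.constr ℤ ![1, (-k) • (1 : A) + x] with hgl
  have hf0 : fl 1 = 1 := by rw [← hB0, hfl, B.constr_basis]; simp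
  have hf1 : fl x = k • (1 : A') + x' := by rw [← hB1, hfl, B.constr_basis]; simp
  have hg0 : gl 1 = 1 := by rw [← hB'0, hgl, B'.constr_basis]; simp
  have hg1 : gl x' = (-k) • (1 : A) + x := by rw [← hB'1, hgl, B'.constr_basis]; simp
  have hgf : ∀ y : A, gl (fl y) = y := by
    intro y
    obtain ⟨m, n, rfl⟩ := hrep y
    simp only [map_add, map_smul, hf0, hf1, hg0, hg1]
    module
  have hfg : ∀ y : A', fl (gl y) = y := by
    intro y
    have hrep' : ∃ m n : ℤ, y = m • (1 : A') + n • x' := by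
      refine ⟨B'.repr y 0, B'.repr y 1, ?_⟩
      have h := B'.sum_repr y
      rw [Fin.sum_univ_two, hB'0, hB'1] at h
      exact h.symm
    obtain ⟨m, n, rfl⟩ := hrep'
    simp only [map_add, map_smul, hg0, hg1, hf0, hf1]
    module
  have hkey : a + b * k = k ^ 2 + a' := by
    have h4 : 4 * (a + b * k) = 4 * (k ^ 2 + a') := by
      linear_combination hdisc + (b + b' - 2 * k) * hk
    linarith
  have hkeyA : ((a : A') + (b : A') * (k : A')) = (k : A') ^ 2 + (a' : A') := by
    exact_mod_cast congrArg (Int.cast : ℤ → A') hkey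
  have hkA : (2 : A') * (k : A') = (b : A') - (b' : A') := by
    exact_mod_cast congrArg (Int.cast : ℤ → A') hk
  have hx'c : x' * x' = (a' : A') + (b' : A') * x' := by
    simpa [zsmul_eq_mul] using hx'
  have hmul : ∀ u v : A, fl (u * v) = fl u * fl v := by
    intro u v
    obtain ⟨m, n, rfl⟩ := hrep u
    obtain ⟨p, q, rfl⟩ := hrep v
    have hexp : (m • (1 : A) + n • x) * (p • (1 : A) + q • x)
        = (m * p + n * q * a) • (1 : A) + (m * q + n * p + n * q * b) • x := by
      simp only [zsmul_eq_mul] at hx ⊢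
      push_cast
      linear_combination ((n : A) * q) * hx
    rw [hexp]
    simp only [map_add, map_smul, hf0, hf1]
    simp only [zsmul_eq_mul]
    push_cast
    linear_combination (-((n : A') * q)) * hx'c + ((n : A') * q) * hkeyA
      - ((n : A') * q) * x' * hkA
  exact ⟨{ toFun := fl, invFun := gl, left_inv := hgf, right_inv := hfg,
           map_mul' := hmul, map_add' := map_add fl }, hf1⟩
end
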